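/- Let C ⊆ ℝⁿ be a closed convex cone and K = {X ∈ Sym(n) : Xw ∈ C for all w ∈ C*}. Then K* = closure(cone{wvᵀ + vwᵀ : v, w ∈ C*}). -/

import Mathlib

open scoped Matrix
open Matrix

/-- The dual cone of a set of matrices in `Sym(n)` w.r.t. the trace inner product. -/
def dualMat {n : ℕ} (S : Set (Matrix (Fin n) (Fin n) ℝ)) :
    Set (Matrix (Fin n) (Fin n) ℝ) :=
  {A | A.IsSymm ∧ ∀ X ∈ S, 0 ≤ (Xᵀ * A).trace}

/-- The dual cone of a set of vectors in `ℝⁿ`. -/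
def dualVec {n : ℕ} (S : Set (Fin n → ℝ)) : Set (Fin n → ℝ) :=
  {w | ∀ z ∈ S, 0 ≤ w ⬝ᵥ z}

/-- The convex conic hull of a set `S` of matrices: all nonnegative scalings of
convex combinations of elements of `S`. -/
def coneHull {n : ℕ} (S : Set (Matrix (Fin n) (Fin n) ℝ)) :
    Set (Matrix (Fin n) (Fin n) ℝ) :=
  {M | ∃ t : ℝ, 0 ≤ t ∧ ∃ N ∈ convexHull ℝ S, M = t • N}

section Aux

open scoped RealInnerProductSpace

variable {n : ℕ}

/-- Entrywise pairing of matrices (= trace inner product). -/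
def mpair {n : ℕ} (X A : Matrix (Fin n) (Fin n) ℝ) : ℝ :=
  ∑ i, ∑ j, X i j * A i j

lemma trace_eq_mpair (X A : Matrix (Fin n) (Fin n) ℝ) : (Xᵀ * A).trace = mpair X A := by
  rw [Matrix.trace, mpair, Finset.sum_comm]
  simp [Matrix.diag, Matrix.mul_apply, Matrix.transpose_apply]

lemma mpair_comm (X A : Matrix (Fin n) (Fin n) ℝ) : mpair X A = mpair A X := by
  simp [mpair, mul_comm]

lemma mpair_transpose (X A : Matrix (Fin n) (Fin n) ℝ) : mpair Xᵀ Aᵀ = mpair X A := by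
  rw [mpair, Finset.sum_comm]
  simp [mpair]

lemma mpair_add_right (X A B : Matrix (Fin n) (Fin n) ℝ) :
    mpair X (A + B) = mpair X A + mpair X B := by
  simp [mpair, mul_add, Finset.sum_add_distrib]

lemma mpair_smul_right (X A : Matrix (Fin n) (Fin n) ℝ) (t : ℝ) :
    mpair X (t • A) = t * mpair X A := by
  simp only [mpair, Matrix.smul_apply, smul_eq_mul, Finset.mul_sum]
  exact Finset.sum_congr rfl fun i _ => Finset.sum_congr rfl fun j _ => by ring

lemma mpair_add_left (X Y A : Matrix (Fin n) (Fin n) ℝ) :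
    mpair (X + Y) A = mpair X A + mpair Y A := by
  rw [mpair_comm, mpair_add_right, mpair_comm A, mpair_comm A]

lemma mpair_smul_left (X A : Matrix (Fin n) (Fin n) ℝ) (t : ℝ) :
    mpair (t • X) A = t * mpair X A := by
  rw [mpair_comm, mpair_smul_right, mpair_comm]

lemma mpair_continuous (X : Matrix (Fin n) (Fin n) ℝ) : Continuous (mpair X) := by
  apply continuous_finset_sum
  intro i _
  apply continuous_finset_sum
  intro j _
  exact continuous_const.mul ((continuous_apply j).comp (continuous_apply i))

lemma mpair_vecMulVec (X : Matrix (Fin n) (Fin n) ℝ) (a b : Fin n → ℝ) :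
    mpair X (vecMulVec a b) = a ⬝ᵥ X.mulVec b := by
  simp only [mpair, vecMulVec_apply, dotProduct, Matrix.mulVec, Finset.mul_sum]
  exact Finset.sum_congr rfl fun i _ => Finset.sum_congr rfl fun j _ => by ring

lemma dot_mulVec_transpose (Y : Matrix (Fin n) (Fin n) ℝ) (v w : Fin n → ℝ) :
    v ⬝ᵥ Yᵀ.mulVec w = w ⬝ᵥ Y.mulVec v := by
  rw [Matrix.mulVec_transpose, dotProduct_comm, ← Matrix.dotProduct_mulVec]

/-- The identification of square matrices with Euclidean space. -/
noncomputable def matE (n : ℕ) :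
    Matrix (Fin n) (Fin n) ℝ ≃ₗ[ℝ] EuclideanSpace ℝ (Fin n × Fin n) :=
  LinearEquiv.trans
    { toFun := fun M => fun p => M p.1 p.2
      invFun := fun f => fun i j => f (i, j)
      map_add' := fun _ _ => rfl
      map_smul' := fun _ _ => rfl
      left_inv := fun _ => rfl
      right_inv := fun _ => rfl }
    (PiLp.continuousLinearEquiv 2 ℝ (fun _ : Fin n × Fin n => ℝ)).symm.toLinearEquiv

lemma matE_apply (M : Matrix (Fin n) (Fin n) ℝ) (p : Fin n × Fin n) :
    matE n M p = M p.1 p.2 := rfl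

lemma matE_continuous : Continuous (matE n) := by
  have h : Continuous fun M : Matrix (Fin n) (Fin n) ℝ => (fun p : Fin n × Fin n => M p.1 p.2) :=
    continuous_pi fun p => (continuous_apply p.2).comp (continuous_apply p.1)
  exact (PiLp.continuousLinearEquiv 2 ℝ (fun _ : Fin n × Fin n => ℝ)).symm.continuous.comp h

lemma matE_symm_continuous : Continuous (matE n).symm := by
  have h : Continuous fun f : Fin n × Fin n → ℝ => (fun i j => f (i, j) : Matrix (Fin n) (Fin n) ℝ) :=
    continuous_pi fun i => continuous_pi fun j => continuous_apply _
  exact h.comp (PiLp.continuousLinearEquiv 2 ℝ (fun _ : Fin n × Fin n => ℝ)).continuous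

/-- The identification as a homeomorphism. -/
noncomputable def matH (n : ℕ) :
    Matrix (Fin n) (Fin n) ℝ ≃ₜ EuclideanSpace ℝ (Fin n × Fin n) where
  toEquiv := (matE n).toEquiv
  continuous_toFun := matE_continuous
  continuous_invFun := matE_symm_continuous

lemma inner_matE (M N : Matrix (Fin n) (Fin n) ℝ) :
    (inner ℝ (matE n M) (matE n N) : ℝ) = mpair M N := by
  rw [PiLp.inner_apply, mpair]
  rw [Fintype.sum_prod_type]
  simp [matE_apply, RCLike.inner_apply, mul_comm]

/-- The identification of `ℝⁿ` with Euclidean space. -/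
noncomputable def vecE (n : ℕ) : (Fin n → ℝ) ≃L[ℝ] EuclideanSpace ℝ (Fin n) :=
  (PiLp.continuousLinearEquiv 2 ℝ (fun _ : Fin n => ℝ)).symm

lemma inner_vecE (v w : Fin n → ℝ) : (inner ℝ (vecE n v) (vecE n w) : ℝ) = v ⬝ᵥ w := by
  rw [PiLp.inner_apply]
  simp [vecE, RCLike.inner_apply, dotProduct, mul_comm]

/-- Bipolar theorem for nonempty closed convex cones in `ℝⁿ` w.r.t. `dualVec`. -/
lemma mem_of_forall_dualVec {C : Set (Fin n → ℝ)} (hCcl : IsClosed C)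
    (hCconv : Convex ℝ C) (hCcone : ∀ c ∈ C, ∀ t : ℝ, 0 ≤ t → t • c ∈ C)
    (hne : C.Nonempty) {z : Fin n → ℝ} (hz : ∀ v ∈ dualVec C, 0 ≤ v ⬝ᵥ z) : z ∈ C := by
  set e := vecE n
  have hadd : ∀ a ∈ C, ∀ b ∈ C, a + b ∈ C := by
    intro a ha b hb
    have hm : (1/2 : ℝ) • a + (1/2 : ℝ) • b ∈ C :=
      hCconv ha hb (by norm_num) (by norm_num) (by norm_num)
    have := hCcone _ hm 2 (by norm_num)
    have h2 : (2:ℝ) • ((1/2 : ℝ) • a + (1/2 : ℝ) • b) = a + b := by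
      rw [smul_add, smul_smul, smul_smul]; norm_num
    rwa [h2] at this
  set C' : ConvexCone ℝ (EuclideanSpace ℝ (Fin n)) :=
    { carrier := e '' C
      smul_mem' := by
        rintro c hc x ⟨a, ha, rfl⟩
        exact ⟨c • a, hCcone a ha c hc.le, map_smul e c a⟩
      add_mem' := by
        rintro x ⟨a, ha, rfl⟩ y ⟨b, hb, rfl⟩
        exact ⟨a + b, hadd a ha b hb, map_add e a b⟩ } with hC'
  have hC'cl : IsClosed (C' : Set (EuclideanSpace ℝ (Fin n))) :=
    e.toHomeomorph.isClosedMap _ hCcl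
  have hC'ne : (C' : Set (EuclideanSpace ℝ (Fin n))).Nonempty := hne.image _
  have key : SetLike.coe (ProperCone.innerDual (SetLike.coe (ProperCone.innerDual (C' : Set (EuclideanSpace ℝ (Fin n)))))) = (C' : Set (EuclideanSpace ℝ (Fin n))) :=
    by have h := congrArg (SetLike.coe : ProperCone ℝ (EuclideanSpace ℝ (Fin n)) → Set (EuclideanSpace ℝ (Fin n))) (ProperCone.innerDual_innerDual ⟨C'.toPointedCone (ConvexCone.Pointed.of_nonempty_of_isClosed hC'ne hC'cl), hC'cl⟩); exact h
  have hez : e z ∈ C' := by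
    rw [← SetLike.mem_coe, ← key, SetLike.mem_coe, ProperCone.mem_innerDual]
    intro y hy
    have h3 : (inner ℝ y (e z) : ℝ) = (e.symm y) ⬝ᵥ z := by
      conv_lhs => rw [← e.apply_symm_apply y]
      exact inner_vecE _ z
    rw [h3]
    refine hz _ fun c hc => ?_
    have h1 : (0:ℝ) ≤ inner ℝ (e c) y := ProperCone.mem_innerDual.1 hy ⟨c, hc, rfl⟩
    rw [← e.apply_symm_apply y, inner_vecE] at h1
    rwa [dotProduct_comm]
  obtain ⟨c, hc, hcz⟩ := hez
  rwa [← e.injective hcz]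

lemma closure_coneHull_subset {G S : Set (Matrix (Fin n) (Fin n) ℝ)}
    (hScl : IsClosed S) (hSconv : Convex ℝ S)
    (hSsmul : ∀ A ∈ S, ∀ t : ℝ, 0 ≤ t → t • A ∈ S) (hGS : G ⊆ S) :
    closure (coneHull G) ⊆ S := by
  apply closure_minimal _ hScl
  rintro M ⟨t, ht, N, hN, rfl⟩
  exact hSsmul N (convexHull_min hGS hSconv hN) t ht

lemma sum_mem_coneHull {S : Set (Matrix (Fin n) (Fin n) ℝ)}
    (h0 : (0 : Matrix (Fin n) (Fin n) ℝ) ∈ S) {ι : Type*} (s : Finset ι)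
    (g : ι → Matrix (Fin n) (Fin n) ℝ) (hg : ∀ i ∈ s, g i ∈ S) :
    (∑ i ∈ s, g i) ∈ coneHull S := by
  rcases s.eq_empty_or_nonempty with rfl | hsne
  · exact ⟨0, le_rfl, 0, subset_convexHull ℝ S h0, by simp⟩
  · have hcard : (0:ℝ) < s.card := by
      exact_mod_cast Finset.card_pos.2 hsne
    refine ⟨(s.card : ℝ), hcard.le, (s.card : ℝ)⁻¹ • ∑ i ∈ s, g i, ?_, ?_⟩
    · have := s.centerMass_mem_convexHull (w := fun _ => (1:ℝ))
        (fun i _ => zero_le_one) (by simpa using hcard) (fun i hi => hg i hi)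
      simpa [Finset.centerMass, Finset.sum_const, nsmul_eq_mul] using this
    · rw [smul_smul, mul_inv_cancel₀ hcard.ne', one_smul]

lemma convex_coneHull' (G : Set (Matrix (Fin n) (Fin n) ℝ)) : Convex ℝ (coneHull G) := by
  rintro M ⟨t1, ht1, N1, hN1, rfl⟩ M' ⟨t2, ht2, N2, hN2, rfl⟩ a b ha hb hab
  have h1 : a • t1 • N1 = (a * t1) • N1 := smul_smul a t1 N1
  have h2 : b • t2 • N2 = (b * t2) • N2 := smul_smul b t2 N2
  rw [h1, h2]
  set s := a * t1 + b * t2 with hs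
  have hsnn : 0 ≤ s := add_nonneg (mul_nonneg ha ht1) (mul_nonneg hb ht2)
  rcases eq_or_lt_of_le hsnn with hz | hpos
  · have hat : a * t1 = 0 ∧ b * t2 = 0 := by
      constructor <;> nlinarith [mul_nonneg ha ht1, mul_nonneg hb ht2]
    rw [hat.1, hat.2]
    exact ⟨0, le_rfl, N1, hN1, by simp⟩
  · refine ⟨s, hsnn, (a * t1 / s) • N1 + (b * t2 / s) • N2,
      (convex_convexHull ℝ G) hN1 hN2 (by positivity) (by positivity) (by field_simp; exact hs.symm), ?_⟩
    rw [smul_add, smul_smul, smul_smul]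
    have e1 : s * (a * t1 / s) = a * t1 := by field_simp
    have e2 : s * (b * t2 / s) = b * t2 := by field_simp
    rw [e1, e2]

lemma isClosed_isSymm : IsClosed {A : Matrix (Fin n) (Fin n) ℝ | A.IsSymm} := by
  have : {A : Matrix (Fin n) (Fin n) ℝ | A.IsSymm} =
      ⋂ (i : Fin n), ⋂ (j : Fin n), {A : Matrix (Fin n) (Fin n) ℝ | A j i = A i j} := by
    ext A
    simp only [Set.mem_setOf_eq, Set.mem_iInter]
    constructor
    · intro h i j; exact congrFun (congrFun h i) j
    · intro h; ext i j; exact h i j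
  rw [this]
  exact isClosed_iInter fun i => isClosed_iInter fun j =>
    isClosed_eq ((continuous_apply i).comp (continuous_apply j))
      ((continuous_apply j).comp (continuous_apply i))

lemma convex_isSymm : Convex ℝ {A : Matrix (Fin n) (Fin n) ℝ | A.IsSymm} := by
  intro A hA B hB a b _ _ _
  simp only [Set.mem_setOf_eq, Matrix.IsSymm] at *
  rw [Matrix.transpose_add, Matrix.transpose_smul, Matrix.transpose_smul, hA, hB]

end Aux

/-- Lemma on `K*`. For a closed convex cone `C ⊆ ℝⁿ` and
`K = {X ∈ Sym(n) : Xw ∈ C for all w ∈ C*}`, one has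
`K* = closure(cone{wvᵀ + vwᵀ : v, w ∈ C*})`. -/
theorem dual_of_K {n : ℕ} (C : Set (Fin n → ℝ)) (hCcl : IsClosed C)
    (hCconv : Convex ℝ C) (hCcone : ∀ c ∈ C, ∀ t : ℝ, 0 ≤ t → t • c ∈ C) :
    dualMat {X : Matrix (Fin n) (Fin n) ℝ | X.IsSymm ∧ ∀ w ∈ dualVec C, X.mulVec w ∈ C} =
      closure (coneHull {M | ∃ v ∈ dualVec C, ∃ w ∈ dualVec C,
        M = vecMulVec w v + vecMulVec v w}) := by
  classical
  set G : Set (Matrix (Fin n) (Fin n) ℝ) :=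
    {M | ∃ v ∈ dualVec C, ∃ w ∈ dualVec C, M = vecMulVec w v + vecMulVec v w} with hGdef
  set K : Set (Matrix (Fin n) (Fin n) ℝ) :=
    {X | X.IsSymm ∧ ∀ w ∈ dualVec C, X.mulVec w ∈ C} with hKdef
  have h0dual : (0 : Fin n → ℝ) ∈ dualVec C := fun z _ => by simp
  have hG0 : (0 : Matrix (Fin n) (Fin n) ℝ) ∈ G :=
    ⟨0, h0dual, 0, h0dual, by ext i j; simp [vecMulVec_apply]⟩
  have hGsym : ∀ M ∈ G, M.IsSymm := by
    rintro M ⟨v, hv, w, hw, rfl⟩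
    rw [Matrix.IsSymm]
    ext i j
    simp [Matrix.transpose_apply, vecMulVec_apply]
    ring
  have hGD : G ⊆ closure (coneHull G) := fun M hM =>
    subset_closure ⟨1, zero_le_one, M, subset_convexHull ℝ G hM, (one_smul ℝ M).symm⟩
  have hD0 : (0 : Matrix (Fin n) (Fin n) ℝ) ∈ closure (coneHull G) := hGD hG0
  ext A
  simp only [dualMat, Set.mem_setOf_eq]
  constructor
  · -- hard direction
    rintro ⟨hAsym, hAK⟩
    by_cases hCne : C.Nonempty
    · by_contra hAD
      have hDconv : Convex ℝ (closure (coneHull G)) := (convex_coneHull' G).closure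
      have hDsmul : ∀ M ∈ closure (coneHull G), ∀ t : ℝ, 0 ≤ t →
          t • M ∈ closure (coneHull G) := by
        intro M hM t ht
        have h1 : t • M ∈ closure ((t • ·) '' coneHull G) :=
          image_closure_subset_closure_image (continuous_const_smul t) ⟨M, hM, rfl⟩
        refine closure_mono ?_ h1
        rintro _ ⟨N, ⟨u, hu, P, hP, rfl⟩, rfl⟩
        exact ⟨t * u, mul_nonneg ht hu, P, hP, smul_smul t u P⟩
      have hDadd : ∀ M ∈ closure (coneHull G), ∀ N ∈ closure (coneHull G),
          M + N ∈ closure (coneHull G) := by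
        intro M hM N hN
        have hm : (1/2 : ℝ) • M + (1/2 : ℝ) • N ∈ closure (coneHull G) :=
          hDconv hM hN (by norm_num) (by norm_num) (by norm_num)
        have h2 := hDsmul _ hm 2 (by norm_num)
        have h3 : (2:ℝ) • ((1/2 : ℝ) • M + (1/2 : ℝ) • N) = M + N := by
          rw [smul_add, smul_smul, smul_smul]; norm_num
        rwa [h3] at h2
      set D' : ConvexCone ℝ (EuclideanSpace ℝ (Fin n × Fin n)) :=
        { carrier := matE n '' closure (coneHull G)
          smul_mem' := by
            rintro c hc x ⟨M, hM, rfl⟩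
            exact ⟨c • M, hDsmul M hM c hc.le, map_smul (matE n) c M⟩
          add_mem' := by
            rintro x ⟨M, hM, rfl⟩ y ⟨N, hN, rfl⟩
            exact ⟨M + N, hDadd M hM N hN, map_add (matE n) M N⟩ } with hD'def
      have hD'cl : IsClosed (D' : Set (EuclideanSpace ℝ (Fin n × Fin n))) :=
        (matH n).isClosedMap _ isClosed_closure
      have hD'ne : (D' : Set (EuclideanSpace ℝ (Fin n × Fin n))).Nonempty :=
        ⟨matE n 0, 0, hD0, rfl⟩
      have hAnm : matE n A ∉ D' := by
        rintro ⟨B, hB, hBE⟩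
        exact hAD ((matE n).injective hBE ▸ hB)
      obtain ⟨y, hy1, hy2⟩ :=
        ProperCone.hyperplane_separation' ⟨D'.toPointedCone (ConvexCone.Pointed.of_nonempty_of_isClosed hD'ne hD'cl), hD'cl⟩ hAnm
      have hyY : y = matE n ((matE n).symm y) := ((matE n).apply_symm_apply y).symm
      set Y : Matrix (Fin n) (Fin n) ℝ := (matE n).symm y with hYdef
      have hy1' : ∀ M ∈ closure (coneHull G), 0 ≤ mpair M Y := by
        intro M hM
        have h := hy1 (matE n M) ⟨M, hM, rfl⟩
        rwa [hyY, inner_matE] at h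
      have hy2' : mpair A Y < 0 := by
        rw [hyY, inner_matE] at hy2
        exact hy2
      set X : Matrix (Fin n) (Fin n) ℝ := (1/2 : ℝ) • (Y + Yᵀ) with hXdef
      have hXsym : X.IsSymm := by
        rw [Matrix.IsSymm, hXdef, Matrix.transpose_smul, Matrix.transpose_add,
          Matrix.transpose_transpose, add_comm]
      have hXK : X ∈ K := by
        refine ⟨hXsym, fun w hw => ?_⟩
        refine mem_of_forall_dualVec hCcl hCconv hCcone hCne fun v hv => ?_
        have hg : (vecMulVec w v + vecMulVec v w) ∈ G := ⟨v, hv, w, hw, rfl⟩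
        have h0 : 0 ≤ mpair (vecMulVec w v + vecMulVec v w) Y := hy1' _ (hGD hg)
        rw [mpair_comm, mpair_add_right, mpair_vecMulVec, mpair_vecMulVec] at h0
        have hxm : v ⬝ᵥ X.mulVec w = (1/2 : ℝ) * (v ⬝ᵥ Y.mulVec w + w ⬝ᵥ Y.mulVec v) := by
          rw [hXdef, Matrix.smul_mulVec, Matrix.add_mulVec, dotProduct_smul,
            smul_eq_mul, dotProduct_add, dot_mulVec_transpose]
        rw [hxm]
        linarith
      have hfinal := hAK X hXK
      rw [trace_eq_mpair] at hfinal
      have hXA : mpair X A = mpair A Y := by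
        rw [hXdef, mpair_smul_left, mpair_add_left]
        have h1 : mpair Yᵀ A = mpair Y A := by
          conv_lhs => rw [← hAsym]
          rw [mpair_transpose]
        rw [h1, mpair_comm A Y]
        ring
      rw [hXA] at hfinal
      linarith
    · -- C is empty
      have hvD : ∀ v : Fin n → ℝ, v ∈ dualVec C := fun v z hz => absurd ⟨z, hz⟩ hCne
      set sv : Fin n × Fin n → (Fin n → ℝ) := fun p => Pi.single p.2 1 with hsv
      set sw : Fin n × Fin n → (Fin n → ℝ) := fun p i => A p.1 p.2 / 2 * Pi.single (M := fun _ => ℝ) p.1 1 i with hsw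
      set g : Fin n × Fin n → Matrix (Fin n) (Fin n) ℝ := fun p =>
        vecMulVec (sw p) (sv p) + vecMulVec (sv p) (sw p) with hgdef
      have hgG : ∀ p, g p ∈ G := fun p => ⟨sv p, hvD _, sw p, hvD _, rfl⟩
      have hsum : A = ∑ p : Fin n × Fin n, g p := by
        ext i j
        rw [Matrix.sum_apply]
        have hsplit : ∀ p : Fin n × Fin n, g p i j = sw p i * sv p j + sv p i * sw p j :=
          fun p => rfl
        simp only [hsplit]
        rw [Finset.sum_add_distrib]
        have h1 : ∑ p : Fin n × Fin n, sw p i * sv p j = A i j / 2 := by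
          rw [Finset.sum_eq_single (i, j)]
          · simp [hsv, hsw]
          · rintro ⟨a, b⟩ _ hp
            have hab : a ≠ i ∨ b ≠ j := by
              by_contra hcc
              push_neg at hcc
              exact hp (by simp [hcc.1, hcc.2])
            rcases hab with h | h
            · simp [hsw, Pi.single_eq_of_ne (Ne.symm h)]
            · simp [hsv, Pi.single_eq_of_ne (Ne.symm h)]
          · intro h; exact absurd (Finset.mem_univ _) h
        have h2 : ∑ p : Fin n × Fin n, sv p i * sw p j = A j i / 2 := by
          rw [Finset.sum_eq_single (j, i)]
          · simp [hsv, hsw]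
          · rintro ⟨a, b⟩ _ hp
            have hab : b ≠ i ∨ a ≠ j := by
              by_contra hcc
              push_neg at hcc
              exact hp (by simp [hcc.1, hcc.2])
            rcases hab with h | h
            · simp [hsv, Pi.single_eq_of_ne (Ne.symm h)]
            · simp [hsw, Pi.single_eq_of_ne (Ne.symm h)]
          · intro h; exact absurd (Finset.mem_univ _) h
        rw [h1, h2]
        have hsymm : A j i = A i j := congrFun (congrFun hAsym i) j
        linarith
      rw [hsum]
      exact subset_closure (sum_mem_coneHull hG0 _ _ (fun p _ => hgG p))
  · -- easy direction
    intro hA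
    constructor
    · exact closure_coneHull_subset isClosed_isSymm convex_isSymm
        (fun B hB t _ => by
          rw [Set.mem_setOf_eq, Matrix.IsSymm, Matrix.transpose_smul]
          exact congrArg (t • ·) hB)
        hGsym hA
    · intro X hX
      rw [trace_eq_mpair]
      refine closure_coneHull_subset (isClosed_le continuous_const (mpair_continuous X))
        ?_ ?_ ?_ hA
      · intro B hB B' hB' a b ha hb _
        rw [Set.mem_setOf_eq, mpair_add_right, mpair_smul_right, mpair_smul_right]
        exact add_nonneg (mul_nonneg ha hB) (mul_nonneg hb hB')
      · intro B hB t ht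
        rw [Set.mem_setOf_eq, mpair_smul_right]
        exact mul_nonneg ht hB
      · rintro M ⟨v, hv, w, hw, rfl⟩
        rw [Set.mem_setOf_eq, mpair_add_right, mpair_vecMulVec, mpair_vecMulVec]
        exact add_nonneg (hw _ (hX.2 v hv)) (hv _ (hX.2 w hw))
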